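/- Let Π be a normal logic program and D_Π its defeasible theory translation. For every atom p ∈ At(Π): (1) Π ⊨_WFS p iff D_Π ⊨_ADL p, and (2) Π ⊣_WFS p iff D_Π ⊣_ADL p. -/

import Mathlib

namespace DLWFS

universe u

/-- Ground literals over a type `A` of atoms: atoms and their classical complements. -/
inductive Lit (A : Type u) : Type u where
  | pos : A → Lit A
  | neg : A → Lit A

/-- The classical complement `p̄` of a literal `p`. -/
def Lit.compl {A : Type u} : Lit A → Lit A
  | .pos a => .neg a
  | .neg a => .pos a

/-- The three kinds of rules of a defeasible theory. -/
inductive RuleKind : Type where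
  | strict
  | defeasible
  | defeater
deriving DecidableEq

/-- A rule of a defeasible theory: a kind, a body (a set of literals) and a head literal. -/
structure DRule (A : Type u) where
  kind : RuleKind
  body : Set (Lit A)
  head : Lit A

/-- A defeasible theory `D = ⟨R, C, ≺⟩`. -/
structure DTheory (A : Type u) where
  rules : Set (DRule A)
  conflicts : Set (Set (Lit A))
  prec : DRule A → DRule A → Prop

namespace DTheory

variable {A : Type u}

/-- The strict rules `R_s`. -/
def Rs (D : DTheory A) : Set (DRule A) := {r ∈ D.rules | r.kind = RuleKind.strict}

/-- The defeasible rules `R_d`. -/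
def Rd (D : DTheory A) : Set (DRule A) := {r ∈ D.rules | r.kind = RuleKind.defeasible}

/-- The defeater rules `R_u`. -/
def Ru (D : DTheory A) : Set (DRule A) := {r ∈ D.rules | r.kind = RuleKind.defeater}

/-- `C[p]`: the conflict sets containing literal `p`. -/
def Cset (D : DTheory A) (p : Lit A) : Set (Set (Lit A)) := {c ∈ D.conflicts | p ∈ c}

/-- Structural conditions in the definition of a defeasible theory: a countable set of
rules with finite bodies, a countable set of finite conflict sets containing every
minimal conflict set `{p, ¬p}`, and an acyclic priority relation over non-strict rules. -/
def WellFormed (D : DTheory A) : Prop :=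
  D.rules.Countable ∧ D.conflicts.Countable ∧
  (∀ r ∈ D.rules, r.body.Finite) ∧
  (∀ c ∈ D.conflicts, c.Finite) ∧
  (∀ p : A, ({Lit.pos p, Lit.neg p} : Set (Lit A)) ∈ D.conflicts) ∧
  (∀ r s, D.prec r s → r.kind ≠ RuleKind.strict ∧ s.kind ≠ RuleKind.strict) ∧
  (∀ r, ¬ Relation.TransGen D.prec r r)

/-- `C = C_MIN`: the conflict sets are exactly the minimal ones `{p, ¬p}`. -/
def MinimalConflicts (D : DTheory A) : Prop :=
  D.conflicts = {c | ∃ p : A, c = ({Lit.pos p, Lit.neg p} : Set (Lit A))}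

end DTheory

/-- A 3-valued interpretation: a pair `⟨T, F⟩` of sets. -/
abbrev Interp (L : Type u) : Type u := Set L × Set L

variable {A : Type u}

/-- `S` is ADL-unfounded with respect to theory `D` and interpretation `I = ⟨T, F⟩`. -/
def ADLUnfounded (D : DTheory A) (I : Interp (Lit A)) (S : Set (Lit A)) : Prop :=
  ∀ p ∈ S,
    (∀ r ∈ D.Rs, r.head = p → (r.body ∩ (I.2 ∪ S)).Nonempty) ∧
    (∀ r ∈ D.Rd, r.head = p →
      (r.body ∩ (I.2 ∪ S)).Nonempty ∨
      ∃ c ∈ D.conflicts, p ∈ c ∧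
        ∀ q ∈ c \ {p}, ∃ s ∈ D.rules, s.head = q ∧ s.body ⊆ I.1 ∧
          (D.prec r s ∨ s.kind = RuleKind.strict))

/-- `S` is NDL-unfounded with respect to theory `D` and interpretation `I = ⟨T, F⟩`. -/
def NDLUnfounded (D : DTheory A) (I : Interp (Lit A)) (S : Set (Lit A)) : Prop :=
  ∀ p ∈ S,
    (∀ r ∈ D.Rs, r.head = p → (r.body ∩ (I.2 ∪ S)).Nonempty) ∧
    (∀ r ∈ D.Rd, r.head = p →
      (r.body ∩ (I.2 ∪ S)).Nonempty ∨
      ∃ c ∈ D.conflicts, p ∈ c ∧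
        ∀ q ∈ c \ {p}, ∃ s ∈ D.rules, s.head = q ∧ s.body ⊆ I.1 ∧
          ¬ D.prec s r)

/-- `U_D(I)` for ADL: the union of all ADL-unfounded sets. -/
def UA (D : DTheory A) (I : Interp (Lit A)) : Set (Lit A) :=
  ⋃₀ {S | ADLUnfounded D I S}

/-- `U_D(I)` for NDL: the union of all NDL-unfounded sets. -/
def UN (D : DTheory A) (I : Interp (Lit A)) : Set (Lit A) :=
  ⋃₀ {S | NDLUnfounded D I S}

/-- `T_D(I)`: the literals having a witness of provability with respect to `I = ⟨T, F⟩`. -/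
def TD (D : DTheory A) (I : Interp (Lit A)) : Set (Lit A) :=
  {p | ∃ r ∈ D.rules, r.head = p ∧ r.body ⊆ I.1 ∧
    (r.kind = RuleKind.strict ∨
      (r.kind = RuleKind.defeasible ∧
        ∀ c ∈ D.conflicts, p ∈ c →
          ∃ q ∈ c \ {p}, ∀ s ∈ D.rules, s.head = q →
            (D.prec s r ∨ (s.body ∩ I.2).Nonempty)))}

/-- `W_D` for ADL. -/
def WA (D : DTheory A) (I : Interp (Lit A)) : Interp (Lit A) := (TD D I, UA D I)

/-- `W_D` for NDL. -/
def WN (D : DTheory A) (I : Interp (Lit A)) : Interp (Lit A) := (TD D I, UN D I)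

/-- `I` is the well-founded model for the operator `W`: the least fixpoint of `W`
(componentwise order). -/
def IsWFModel {L : Type u} (W : Interp L → Interp L) (I : Interp L) : Prop :=
  W I = I ∧ ∀ J, W J = J → I.1 ⊆ J.1 ∧ I.2 ⊆ J.2

/-- A rule of a normal logic program: `head ← pos, ∼neg`. -/
structure NRule (A : Type u) where
  head : A
  pos : Set A
  neg : Set A

/-- A normal logic program: a set of rules. -/
abbrev NProgram (A : Type u) : Type u := Set (NRule A)

/-- Structural conditions in the definition of a normal logic program: a countable
set of ground rules with finite bodies. -/
def NProgram.WellFormed (P : NProgram A) : Prop :=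
  P.Countable ∧ ∀ r ∈ P, r.pos.Finite ∧ r.neg.Finite

/-- The immediate consequence operator `T_Π` on 3-valued interpretations. -/
def TP (P : NProgram A) (I : Interp A) : Set A :=
  {a | ∃ r ∈ P, r.head = a ∧ r.pos ⊆ I.1 ∧ r.neg ⊆ I.2}

/-- `S` is an unfounded set of program `P` with respect to interpretation `I = ⟨T, F⟩`. -/
def PUnfounded (P : NProgram A) (I : Interp A) (S : Set A) : Prop :=
  ∀ p ∈ S, ∀ r ∈ P, r.head = p →
    (r.pos ∩ (I.2 ∪ S)).Nonempty ∨ (r.neg ∩ I.1).Nonempty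

/-- `U_Π(I)`: the greatest unfounded set (union of all unfounded sets). -/
def UP (P : NProgram A) (I : Interp A) : Set A :=
  ⋃₀ {S | PUnfounded P I S}

/-- `W_Π(I) = ⟨T_Π(I), U_Π(I)⟩`. -/
def WP (P : NProgram A) (I : Interp A) : Interp A := (TP P I, UP P I)

/-- Transfinite iteration of an operator `W` from `⊥`, taking suprema at limit ordinals. -/
noncomputable def iterW {α : Type*} [CompleteLattice α] (W : α → α) : Ordinal.{0} → α :=
  fun o =>
    Ordinal.limitRecOn (motive := fun _ => α) o ⊥ (fun _ ih => W ih)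
      (fun o' _ ih => ⨆ x : Set.Iio o', ih x.1 x.2)

/-- One step of the immediate consequence operator for a set of defeasible-theory rules. -/
def TRstep (R : Set (DRule A)) (S : Set (Lit A)) : Set (Lit A) :=
  {p | ∃ r ∈ R, r.head = p ∧ r.body ⊆ S}

/-- The finite iterates `T_R ↑ n`. -/
def TRiter (R : Set (DRule A)) : ℕ → Set (Lit A)
  | 0 => ∅
  | n + 1 => TRstep R (TRiter R n)

/-- `Cl(R) = T_R ↑ ω`. -/
def ClR (R : Set (DRule A)) : Set (Lit A) := ⋃ n, TRiter R n

/-- The `α`-reduct `D_α^S` of a defeasible theory. -/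
def alphaReduct (D : DTheory A) (S : Set (Lit A)) : Set (DRule A) :=
  D.Rs ∪ {r ∈ D.Rd | ∀ c ∈ D.conflicts, r.head ∈ c → ∃ q ∈ c \ {r.head}, q ∉ S}

/-- The ambiguity-propagating operator `α_D(S) = Cl(D_α^S)`. -/
def alphaOp (D : DTheory A) (S : Set (Lit A)) : Set (Lit A) := ClR (alphaReduct D S)

/-- The `β`-reduct `D_β^S` of a defeasible theory. -/
def betaReduct (D : DTheory A) (S : Set (Lit A)) : Set (DRule A) :=
  D.Rs ∪ {r ∈ D.Rd | ∀ c ∈ D.conflicts, r.head ∈ c →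
    ∃ q ∈ c \ {r.head}, ∀ s ∈ D.rules, s.head = q → (¬ s.body ⊆ S ∨ D.prec s r)}

/-- The ambiguity-blocking operator `β_D(S) = Cl(D_β^S)`. -/
def betaOp (D : DTheory A) (S : Set (Lit A)) : Set (Lit A) := ClR (betaReduct D S)

/-- `S` is an `α`-stable set of `D`. -/
def AlphaStable (D : DTheory A) (S : Set (Lit A)) : Prop := alphaOp D S = S

/-- `S` is a `β`-stable set of `D`. -/
def BetaStable (D : DTheory A) (S : Set (Lit A)) : Prop := betaOp D S = S

/-- The sequence `X_D↑λ`: `X↑0 = ∅`, `X↑(λ+1) = β_D(β_D(X↑λ))`, unions at limits. -/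
noncomputable def Xseq (D : DTheory A) : Ordinal.{0} → Set (Lit A) :=
  iterW (fun S => betaOp D (betaOp D S))

/-- The Gelfond–Lifschitz reduct `Π^S`. -/
def glReduct (P : NProgram A) (S : Set A) : NProgram A :=
  {r' | ∃ r ∈ P, r.neg ∩ S = ∅ ∧ r' = NRule.mk r.head r.pos ∅}

/-- One step of the immediate consequence operator for a NAF-free program. -/
def TPstep (P : NProgram A) (S : Set A) : Set A :=
  {a | ∃ r ∈ P, r.head = a ∧ r.pos ⊆ S}

/-- The finite iterates `T_Π ↑ n` of a NAF-free program. -/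
def TPiter (P : NProgram A) : ℕ → Set A
  | 0 => ∅
  | n + 1 => TPstep P (TPiter P n)

/-- `Cl(Π) = T_Π ↑ ω`. -/
def ClP (P : NProgram A) : Set A := ⋃ n, TPiter P n

/-- The Gelfond–Lifschitz operator `γ_Π(S) = Cl(Π^S)`. -/
def gamma (P : NProgram A) (S : Set A) : Set A := ClP (glReduct P S)

/-- `S` is a stable model of `P`. -/
def StableModel (P : NProgram A) (S : Set A) : Prop := gamma P S = S

/-- `Prod(C[p])`: all sets obtained by choosing one literal other than `p` from each
conflict set containing `p`. -/
def ProdC (D : DTheory A) (p : Lit A) : Set (Set (Lit A)) :=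
  {Q | ∃ f : Set (Lit A) → Lit A,
    (∀ c ∈ D.conflicts, p ∈ c → f c ∈ c \ {p}) ∧
    Q = f '' {c ∈ D.conflicts | p ∈ c}}

/-- The logic program translation `Π_D` of a defeasible theory `D` (negative literals
are treated as fresh atoms, so the atoms of the program are the literals of `D`). -/
def lpTrans (D : DTheory A) : NProgram (Lit A) :=
  {r' | ∃ r ∈ D.Rs, r' = NRule.mk r.head r.body ∅} ∪
  {r' | ∃ r ∈ D.Rd, ∃ Q ∈ ProdC D r.head, r' = NRule.mk r.head r.body Q}

/-- The explicit version `Φ` of a normal program `Π`: atoms of `Φ` are the literals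
over the atoms of `Π` (`¬p` being a fresh atom). -/
def explicitVer (P : NProgram A) : NProgram (Lit A) :=
  {r' | ∃ r ∈ P, r' = NRule.mk (Lit.pos r.head) (Lit.pos '' r.pos ∪ Lit.neg '' r.neg) ∅} ∪
  {r' | ∃ p : A, r' = NRule.mk (Lit.neg p) ∅ {Lit.pos p}}

/-- The minimal conflict sets over atom type `A`. -/
def CMin (A : Type u) : Set (Set (Lit A)) :=
  {c | ∃ p : A, c = ({Lit.pos p, Lit.neg p} : Set (Lit A))}

/-- The defeasible theory translation `D_Π` of a normal program `Π`: each program rule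
becomes a strict rule (default literals `∼b` becoming negative literals `¬b`), and each
atom `p` yields a presumption `∅ ⇒ ¬p`; conflict sets are minimal and `≺` is empty. -/
def dtTrans (P : NProgram A) : DTheory A :=
  { rules :=
      {e | ∃ r ∈ P, e = DRule.mk RuleKind.strict
            (Lit.pos '' r.pos ∪ Lit.neg '' r.neg) (Lit.pos r.head)} ∪
      {e | ∃ p : A, e = DRule.mk RuleKind.defeasible ∅ (Lit.neg p)}
    conflicts := CMin A
    prec := fun _ _ => False }

/-- `M^¬ = M ∪ {¬p : p ∉ M}`, atoms being identified with positive literals. -/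
def negCompl (M : Set A) : Set (Lit A) :=
  Lit.pos '' M ∪ Lit.neg '' {p | p ∉ M}

end DLWFS

namespace DLWFS


section Aux

variable {A : Type*}

/-- Literal body of a program rule. -/
def litBody (nr : NRule A) : Set (Lit A) := Lit.pos '' nr.pos ∪ Lit.neg '' nr.neg

/-- Strict translation of a program rule. -/
def strictT (nr : NRule A) : DRule A := ⟨RuleKind.strict, litBody nr, Lit.pos nr.head⟩

/-- Presumption rule for an atom. -/
def presum (a : A) : DRule A := ⟨RuleKind.defeasible, ∅, Lit.neg a⟩

/-- Encoding of a program interpretation as a literal interpretation. -/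
def Emap (I : Interp A) : Interp (Lit A) :=
  (Lit.pos '' I.1 ∪ Lit.neg '' I.2, Lit.pos '' I.2 ∪ Lit.neg '' I.1)

@[simp] lemma pos_mem_posImg {T : Set A} {a : A} :
    Lit.pos a ∈ Lit.pos '' T ↔ a ∈ T := by
  constructor
  · rintro ⟨b, hb, he⟩; cases he; exact hb
  · intro h; exact ⟨a, h, rfl⟩

@[simp] lemma pos_mem_negImg {T : Set A} {a : A} :
    Lit.pos a ∈ Lit.neg '' T ↔ False := by
  constructor
  · rintro ⟨b, hb, he⟩; cases he
  · intro h; exact h.elim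

@[simp] lemma neg_mem_posImg {T : Set A} {a : A} :
    Lit.neg a ∈ Lit.pos '' T ↔ False := by
  constructor
  · rintro ⟨b, hb, he⟩; cases he
  · intro h; exact h.elim

@[simp] lemma neg_mem_negImg {T : Set A} {a : A} :
    Lit.neg a ∈ Lit.neg '' T ↔ a ∈ T := by
  constructor
  · rintro ⟨b, hb, he⟩; cases he; exact hb
  · intro h; exact ⟨a, h, rfl⟩

lemma mem_dtRules {P : NProgram A} {r : DRule A} :
    r ∈ (dtTrans P).rules ↔ (∃ nr ∈ P, r = strictT nr) ∨ (∃ a, r = presum a) :=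
  Iff.rfl

lemma mem_dtRs {P : NProgram A} {r : DRule A} :
    r ∈ (dtTrans P).Rs ↔ ∃ nr ∈ P, r = strictT nr := by
  constructor
  · rintro ⟨hr, hk⟩
    rcases mem_dtRules.1 hr with h | ⟨a, rfl⟩
    · exact h
    · simp [presum] at hk
  · rintro ⟨nr, hnr, rfl⟩
    exact ⟨mem_dtRules.2 (Or.inl ⟨nr, hnr, rfl⟩), rfl⟩

lemma mem_dtRd {P : NProgram A} {r : DRule A} :
    r ∈ (dtTrans P).Rd ↔ ∃ a, r = presum a := by
  constructor
  · rintro ⟨hr, hk⟩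
    rcases mem_dtRules.1 hr with ⟨nr, hnr, rfl⟩ | h
    · simp [strictT] at hk
    · exact h
  · rintro ⟨a, rfl⟩
    exact ⟨mem_dtRules.2 (Or.inr ⟨a, rfl⟩), rfl⟩

lemma mem_dtConf {P : NProgram A} {c : Set (Lit A)} :
    c ∈ (dtTrans P).conflicts ↔ ∃ a, c = ({Lit.pos a, Lit.neg a} : Set (Lit A)) :=
  Iff.rfl

lemma litBody_subset_iff {nr : NRule A} {X : Set (Lit A)} :
    litBody nr ⊆ X ↔ (∀ b ∈ nr.pos, Lit.pos b ∈ X) ∧ (∀ b ∈ nr.neg, Lit.neg b ∈ X) := by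
  constructor
  · intro h
    exact ⟨fun b hb => h (Or.inl ⟨b, hb, rfl⟩), fun b hb => h (Or.inr ⟨b, hb, rfl⟩)⟩
  · rintro ⟨h1, h2⟩ l (⟨b, hb, rfl⟩ | ⟨b, hb, rfl⟩)
    · exact h1 b hb
    · exact h2 b hb

lemma litBody_inter_nonempty_iff {nr : NRule A} {X : Set (Lit A)} :
    (litBody nr ∩ X).Nonempty ↔
      (∃ b ∈ nr.pos, Lit.pos b ∈ X) ∨ (∃ b ∈ nr.neg, Lit.neg b ∈ X) := by
  constructor
  · rintro ⟨l, hl, hlX⟩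
    rcases hl with ⟨b, hb, rfl⟩ | ⟨b, hb, rfl⟩
    · exact Or.inl ⟨b, hb, hlX⟩
    · exact Or.inr ⟨b, hb, hlX⟩
  · rintro (⟨b, hb, hbX⟩ | ⟨b, hb, hbX⟩)
    · exact ⟨Lit.pos b, Or.inl ⟨b, hb, rfl⟩, hbX⟩
    · exact ⟨Lit.neg b, Or.inr ⟨b, hb, rfl⟩, hbX⟩

lemma TD_pos {P : NProgram A} {J : Interp (Lit A)} {a : A} :
    Lit.pos a ∈ TD (dtTrans P) J ↔ ∃ nr ∈ P, nr.head = a ∧ litBody nr ⊆ J.1 := by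
  constructor
  · rintro ⟨r, hr, hhead, hbody, -⟩
    rcases mem_dtRules.1 hr with ⟨nr, hnr, rfl⟩ | ⟨b, rfl⟩
    · exact ⟨nr, hnr, by simpa [strictT] using hhead, hbody⟩
    · simp [presum] at hhead
  · rintro ⟨nr, hnr, rfl, hbody⟩
    exact ⟨strictT nr, mem_dtRules.2 (Or.inl ⟨nr, hnr, rfl⟩), rfl, hbody, Or.inl rfl⟩

lemma TD_neg {P : NProgram A} {J : Interp (Lit A)} {a : A} :
    Lit.neg a ∈ TD (dtTrans P) J ↔
      ∀ nr ∈ P, nr.head = a → (litBody nr ∩ J.2).Nonempty := by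
  constructor
  · rintro ⟨r, hr, hhead, -, hw⟩ nr hnr hh
    rcases mem_dtRules.1 hr with ⟨nr', hnr', rfl⟩ | ⟨b, rfl⟩
    · simp [strictT] at hhead
    · have hb : b = a := by simpa [presum] using hhead
      subst hb
      rcases hw with hstrict | ⟨-, hc⟩
      · simp [presum] at hstrict
      · obtain ⟨q, hq, hall⟩ :=
          hc ({Lit.pos b, Lit.neg b}) (mem_dtConf.2 ⟨b, rfl⟩) (by simp [presum])
        have hqe : q = Lit.pos b := by
          rcases hq with ⟨hq1, hq2⟩
          rcases hq1 with h | h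
          · exact h
          · exact absurd h (by simpa [presum] using hq2)
        subst hqe
        have := hall (strictT nr) (mem_dtRules.2 (Or.inl ⟨nr, hnr, rfl⟩))
          (by simp [strictT, hh])
        rcases this with h | h
        · exact h.elim
        · exact h
  · intro h
    refine ⟨presum a, mem_dtRules.2 (Or.inr ⟨a, rfl⟩), rfl, by simp [presum],
      Or.inr ⟨rfl, ?_⟩⟩
    rintro c hc hac
    obtain ⟨p, rfl⟩ := mem_dtConf.1 hc
    have hpa : p = a := by
      rcases hac with h | h
      · cases h
      · cases h; rfl
    subst hpa
    refine ⟨Lit.pos p, ⟨by simp, by simp [presum]⟩, ?_⟩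
    intro s hs hshead
    rcases mem_dtRules.1 hs with ⟨nr, hnr, rfl⟩ | ⟨b, rfl⟩
    · have hh : nr.head = p := by simpa [strictT] using hshead
      exact Or.inr (h nr hnr hh)
    · simp [presum] at hshead

lemma subset_UA {D : DTheory A} {J : Interp (Lit A)} {S : Set (Lit A)}
    (h : ADLUnfounded D J S) : S ⊆ UA D J :=
  fun p hp => ⟨S, h, hp⟩

lemma subset_UP {P : NProgram A} {I : Interp A} {S : Set A}
    (h : PUnfounded P I S) : S ⊆ UP P I :=
  fun p hp => ⟨S, h, hp⟩

lemma UP_unfounded {P : NProgram A} {I : Interp A} : PUnfounded P I (UP P I) := by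
  rintro p ⟨S, hS, hpS⟩ r hr hh
  rcases hS p hpS r hr hh with ⟨x, hx1, hx2⟩ | h
  · refine Or.inl ⟨x, hx1, ?_⟩
    rcases hx2 with h | h
    · exact Or.inl h
    · exact Or.inr ⟨S, hS, h⟩
  · exact Or.inr h

lemma ADLUnf_pos_mem {P : NProgram A} {J : Interp (Lit A)} {S : Set (Lit A)} {a : A}
    (h : ADLUnfounded (dtTrans P) J S) (ha : Lit.pos a ∈ S) :
    ∀ nr ∈ P, nr.head = a → (litBody nr ∩ (J.2 ∪ S)).Nonempty := by
  intro nr hnr hh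
  exact (h _ ha).1 (strictT nr) (mem_dtRs.2 ⟨nr, hnr, rfl⟩) (by simp [strictT, hh])

lemma ADLUnf_neg_mem {P : NProgram A} {J : Interp (Lit A)} {S : Set (Lit A)} {a : A}
    (h : ADLUnfounded (dtTrans P) J S) (ha : Lit.neg a ∈ S) :
    ∃ nr ∈ P, nr.head = a ∧ litBody nr ⊆ J.1 := by
  have hd := (h _ ha).2 (presum a) (mem_dtRd.2 ⟨a, rfl⟩) rfl
  rcases hd with hne | ⟨c, hc, hac, hq⟩
  · simp [presum] at hne
  · obtain ⟨p, rfl⟩ := mem_dtConf.1 hc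
    have hpa : p = a := by
      rcases hac with h' | h'
      · cases h'
      · cases h'; rfl
    subst hpa
    obtain ⟨s, hs, hshead, hsbody, -⟩ := hq (Lit.pos p) ⟨by simp, by simp⟩
    rcases mem_dtRules.1 hs with ⟨nr, hnr, rfl⟩ | ⟨b, rfl⟩
    · exact ⟨nr, hnr, by simpa [strictT] using hshead, hsbody⟩
    · simp [presum] at hshead

lemma ADLUnf_of {P : NProgram A} {J : Interp (Lit A)} {S : Set (Lit A)}
    (h1 : ∀ a, Lit.pos a ∈ S → ∀ nr ∈ P, nr.head = a →
      (litBody nr ∩ (J.2 ∪ S)).Nonempty)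
    (h2 : ∀ a, Lit.neg a ∈ S → ∃ nr ∈ P, nr.head = a ∧ litBody nr ⊆ J.1) :
    ADLUnfounded (dtTrans P) J S := by
  intro l hl
  constructor
  · intro r hr hhead
    obtain ⟨nr, hnr, rfl⟩ := mem_dtRs.1 hr
    cases l with
    | pos a =>
        have hh : nr.head = a := by simpa [strictT] using hhead
        exact h1 a hl nr hnr hh
    | neg a => simp [strictT] at hhead
  · intro r hr hhead
    obtain ⟨b, rfl⟩ := mem_dtRd.1 hr
    cases l with
    | pos a => simp [presum] at hhead
    | neg a =>
        have hb : b = a := by simpa [presum] using hhead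
        subst hb
        obtain ⟨nr, hnr, hh, hbody⟩ := h2 b hl
        refine Or.inr ⟨{Lit.pos b, Lit.neg b}, mem_dtConf.2 ⟨b, rfl⟩, by simp, ?_⟩
        rintro q ⟨hq1, hq2⟩
        have hqe : q = Lit.pos b := by
          rcases hq1 with h' | h'
          · exact h'
          · exact absurd h' (by simpa using hq2)
        subst hqe
        exact ⟨strictT nr, mem_dtRules.2 (Or.inl ⟨nr, hnr, rfl⟩),
          by simp [strictT, hh], hbody, Or.inr rfl⟩

lemma UA_neg {P : NProgram A} {J : Interp (Lit A)} {a : A} :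
    Lit.neg a ∈ UA (dtTrans P) J ↔ ∃ nr ∈ P, nr.head = a ∧ litBody nr ⊆ J.1 := by
  constructor
  · rintro ⟨S, hS, haS⟩
    exact ADLUnf_neg_mem hS haS
  · intro h
    refine subset_UA (S := {Lit.neg a}) (ADLUnf_of ?_ ?_) rfl
    · intro b hb; simp at hb
    · intro b hb
      have : b = a := by simpa using hb
      subst this; exact h

@[simp] lemma pos_mem_Emap1 {I : Interp A} {b : A} :
    Lit.pos b ∈ (Emap I).1 ↔ b ∈ I.1 := by simp [Emap]

@[simp] lemma neg_mem_Emap1 {I : Interp A} {b : A} :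
    Lit.neg b ∈ (Emap I).1 ↔ b ∈ I.2 := by simp [Emap]

@[simp] lemma pos_mem_Emap2 {I : Interp A} {b : A} :
    Lit.pos b ∈ (Emap I).2 ↔ b ∈ I.2 := by simp [Emap]

@[simp] lemma neg_mem_Emap2 {I : Interp A} {b : A} :
    Lit.neg b ∈ (Emap I).2 ↔ b ∈ I.1 := by simp [Emap]

lemma keyT {P : NProgram A} {I : Interp A} (hT : TP P I = I.1) {a : A} :
    (∃ nr ∈ P, nr.head = a ∧ litBody nr ⊆ (Emap I).1) ↔ a ∈ I.1 := by
  rw [← hT]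
  constructor
  · rintro ⟨nr, hnr, hh, hb⟩
    obtain ⟨h1, h2⟩ := litBody_subset_iff.1 hb
    exact ⟨nr, hnr, hh, fun b hb' => by simpa using h1 b hb',
      fun b hb' => by simpa using h2 b hb'⟩
  · rintro ⟨nr, hnr, hh, h1, h2⟩
    exact ⟨nr, hnr, hh, litBody_subset_iff.2
      ⟨fun b hb' => by simpa using h1 hb', fun b hb' => by simpa using h2 hb'⟩⟩

lemma lemA {P : NProgram A} {I : Interp A} (hfix : WP P I = I) :
    WA (dtTrans P) (Emap I) = Emap I := by
  have hT : TP P I = I.1 := congrArg Prod.fst hfix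
  have hU : UP P I = I.2 := congrArg Prod.snd hfix
  have hUPunf : PUnfounded P I I.2 := hU ▸ UP_unfounded
  have hinter2 : ∀ nr : NRule A, (litBody nr ∩ (Emap I).2).Nonempty ↔
      (nr.pos ∩ I.2).Nonempty ∨ (nr.neg ∩ I.1).Nonempty := by
    intro nr
    rw [litBody_inter_nonempty_iff]
    constructor
    · rintro (⟨b, hb, hb2⟩ | ⟨b, hb, hb2⟩)
      · exact Or.inl ⟨b, hb, by simpa using hb2⟩
      · exact Or.inr ⟨b, hb, by simpa using hb2⟩
    · rintro (⟨b, hb, hb2⟩ | ⟨b, hb, hb2⟩)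
      · exact Or.inl ⟨b, hb, by simpa using hb2⟩
      · exact Or.inr ⟨b, hb, by simpa using hb2⟩
  have hTD : TD (dtTrans P) (Emap I) = (Emap I).1 := by
    ext l
    cases l with
    | pos a =>
        rw [TD_pos, pos_mem_Emap1]
        exact keyT hT
    | neg a =>
        rw [TD_neg, neg_mem_Emap1]
        constructor
        · intro h
          rw [← hU]
          refine subset_UP (S := {a}) ?_ rfl
          intro p hp r hr hh
          have hp' : p = a := hp
          subst hp'
          rcases (hinter2 r).1 (h r hr hh) with ⟨x, hx1, hx2⟩ | h'
          · exact Or.inl ⟨x, hx1, Or.inl hx2⟩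
          · exact Or.inr h'
        · intro ha nr hnr hh
          rcases hUPunf a ha nr hnr hh with ⟨x, hx1, hx2⟩ | h'
          · refine (hinter2 nr).2 (Or.inl ⟨x, hx1, ?_⟩)
            rcases hx2 with h'' | h'' <;> exact h''
          · exact (hinter2 nr).2 (Or.inr h')
  have hUA : UA (dtTrans P) (Emap I) = (Emap I).2 := by
    ext l
    cases l with
    | neg a =>
        rw [UA_neg, neg_mem_Emap2]
        exact keyT hT
    | pos a =>
        rw [pos_mem_Emap2]
        constructor
        · rintro ⟨S, hS, haS⟩
          rw [← hU]
          refine subset_UP (S := {b | Lit.pos b ∈ S}) ?_ haS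
          intro p hp nr hnr hh
          obtain ⟨l, hl, hl2⟩ := ADLUnf_pos_mem hS hp nr hnr hh
          rcases hl with ⟨c, hc, rfl⟩ | ⟨c, hc, rfl⟩
          · rcases hl2 with hl2 | hl2
            · exact Or.inl ⟨c, hc, Or.inl (by simpa using hl2)⟩
            · exact Or.inl ⟨c, hc, Or.inr hl2⟩
          · rcases hl2 with hl2 | hl2
            · exact Or.inr ⟨c, hc, by simpa using hl2⟩
            · obtain ⟨nr', hnr', hh', hb'⟩ := ADLUnf_neg_mem hS hl2
              exact Or.inr ⟨c, hc, (keyT hT).1 ⟨nr', hnr', hh', hb'⟩⟩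
        · intro ha
          refine subset_UA (S := Lit.pos '' I.2) (ADLUnf_of ?_ ?_) ⟨a, ha, rfl⟩
          · intro b hb nr hnr hh
            have hb' : b ∈ I.2 := by simpa using hb
            rcases hUPunf b hb' nr hnr hh with ⟨x, hx1, hx2⟩ | ⟨x, hx1, hx2⟩
            · have hx2' : x ∈ I.2 := by rcases hx2 with h | h <;> exact h
              exact ⟨Lit.pos x, Or.inl ⟨x, hx1, rfl⟩, Or.inl (by simpa using hx2')⟩
            · exact ⟨Lit.neg x, Or.inr ⟨x, hx1, rfl⟩, Or.inl (by simpa using hx2)⟩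
          · intro b hb
            simp at hb
  exact Prod.ext hTD hUA

lemma lemB {P : NProgram A} {J : Interp (Lit A)} (hfix : WA (dtTrans P) J = J) :
    WP P ({a | Lit.pos a ∈ J.1}, {a | Lit.pos a ∈ J.2}) =
      ({a | Lit.pos a ∈ J.1}, {a | Lit.pos a ∈ J.2}) := by
  have hT : TD (dtTrans P) J = J.1 := congrArg Prod.fst hfix
  have hU : UA (dtTrans P) J = J.2 := congrArg Prod.snd hfix
  have f2 : ∀ b : A, Lit.neg b ∈ J.2 ↔ Lit.pos b ∈ J.1 := by
    intro b
    have hiff : Lit.neg b ∈ UA (dtTrans P) J ↔ Lit.pos b ∈ TD (dtTrans P) J := by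
      rw [UA_neg, TD_pos]
    rw [← hU, ← hT]
    exact hiff
  have f3 : ∀ b : A, Lit.neg b ∈ J.1 ↔ Lit.pos b ∈ J.2 := by
    intro b
    constructor
    · intro h
      have h' := (TD_neg (P := P)).1 (hT ▸ h)
      rw [← hU]
      refine subset_UA (S := {Lit.pos b}) (ADLUnf_of ?_ ?_) rfl
      · intro c hc nr hnr hh
        have hc' : c = b := by simpa using hc
        subst hc'
        obtain ⟨l, hl, hl2⟩ := h' nr hnr hh
        exact ⟨l, hl, Or.inl hl2⟩
      · intro c hc; simp at hc
    · intro h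
      obtain ⟨S, hS, hbS⟩ := hU ▸ h
      have hSsub : S ⊆ J.2 := hU ▸ subset_UA hS
      rw [← hT, TD_neg]
      intro nr hnr hh
      obtain ⟨l, hl, hl2⟩ := ADLUnf_pos_mem hS hbS nr hnr hh
      refine ⟨l, hl, ?_⟩
      rcases hl2 with h' | h'
      · exact h'
      · exact hSsub h'
  have hTP : TP P ({a | Lit.pos a ∈ J.1}, {a | Lit.pos a ∈ J.2}) =
      {a | Lit.pos a ∈ J.1} := by
    ext a
    constructor
    · rintro ⟨nr, hnr, hh, h1, h2⟩
      show Lit.pos a ∈ J.1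
      rw [← hT]
      exact TD_pos.2 ⟨nr, hnr, hh, litBody_subset_iff.2
        ⟨fun b hb => h1 hb, fun b hb => (f3 b).2 (h2 hb)⟩⟩
    · intro ha
      obtain ⟨nr, hnr, hh, hb⟩ := TD_pos.1 (hT ▸ (ha : Lit.pos a ∈ J.1))
      obtain ⟨h1, h2⟩ := litBody_subset_iff.1 hb
      exact ⟨nr, hnr, hh, fun b hb' => h1 b hb', fun b hb' => (f3 b).1 (h2 b hb')⟩
  have hUP : UP P ({a | Lit.pos a ∈ J.1}, {a | Lit.pos a ∈ J.2}) =
      {a | Lit.pos a ∈ J.2} := by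
    ext a
    constructor
    · rintro ⟨S, hS, haS⟩
      rw [Set.mem_setOf_eq, ← hU]
      refine subset_UA (S := Lit.pos '' S) (ADLUnf_of ?_ ?_) ⟨a, haS, rfl⟩
      · intro b hb nr hnr hh
        have hb' : b ∈ S := by simpa using hb
        rcases hS b hb' nr hnr hh with ⟨c, hc, hc2⟩ | ⟨c, hc, hc2⟩
        · rcases hc2 with h' | h'
          · exact ⟨Lit.pos c, Or.inl ⟨c, hc, rfl⟩, Or.inl h'⟩
          · exact ⟨Lit.pos c, Or.inl ⟨c, hc, rfl⟩, Or.inr ⟨c, h', rfl⟩⟩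
        · exact ⟨Lit.neg c, Or.inr ⟨c, hc, rfl⟩, Or.inl ((f2 c).2 hc2)⟩
      · intro b hb; simp at hb
    · intro ha
      refine subset_UP (S := {b | Lit.pos b ∈ J.2}) ?_ ha
      intro p hp r hr hh
      obtain ⟨S, hS, hpS⟩ := hU ▸ (hp : Lit.pos p ∈ J.2)
      have hSsub : S ⊆ J.2 := hU ▸ subset_UA hS
      obtain ⟨l, hl, hl2⟩ := ADLUnf_pos_mem hS hpS r hr hh
      have hl2' : l ∈ J.2 := by rcases hl2 with h' | h'; exact h'; exact hSsub h'
      rcases hl with ⟨c, hc, rfl⟩ | ⟨c, hc, rfl⟩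
      · exact Or.inl ⟨c, hc, Or.inl hl2'⟩
      · exact Or.inr ⟨c, hc, (f2 c).1 hl2'⟩
  exact Prod.ext hTP hUP

end Aux

/-- Let `Π` be a normal program and `D_Π` its defeasible theory translation. For every
atom `p`: `Π ⊨_WFS p` iff `D_Π ⊨_ADL p`, and `Π ⊣_WFS p` iff `D_Π ⊣_ADL p`. -/
theorem dtTrans_wfs_adl {A : Type*} (P : NProgram A) (hwf : P.WellFormed)
    (IP : Interp A) (hIP : IsWFModel (WP P) IP)
    (ID : Interp (Lit A)) (hID : IsWFModel (WA (dtTrans P)) ID) :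
    ∀ p : A, (p ∈ IP.1 ↔ Lit.pos p ∈ ID.1) ∧ (p ∈ IP.2 ↔ Lit.pos p ∈ ID.2) := by
  obtain ⟨hfixP, hleastP⟩ := hIP
  obtain ⟨hfixD, hleastD⟩ := hID
  have h1 := hleastD _ (lemA hfixP)
  have h2 := hleastP _ (lemB hfixD)
  intro p
  refine ⟨⟨fun hp => h2.1 hp, fun hp => ?_⟩, ⟨fun hp => h2.2 hp, fun hp => ?_⟩⟩
  · have := h1.1 hp
    simpa using this
  · have := h1.2 hp
    simpa using this

end DLWFS
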